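/- Spectral-norm residual bound for low-rank matrix perturbation. Let X, Z ∈ ℝ^{m×n}, Y = X + Z, and suppose rank(X) ≤ r. Let Û ∈ ℝ^{m×r} satisfy ÛᵀÛ = I_r, let Û_⊥ ∈ ℝ^{m×(m−r)} satisfy Û_⊥ᵀÛ_⊥ = I_{m−r} and ÛᵀÛ_⊥ = 0, and assume ‖Û_⊥ᵀ Y‖ ≤ ‖Y − B‖ for every matrix B ∈ ℝ^{m×n} with rank(B) ≤ r (this holds in particular when the columns of Û are leading r left singular vectors of Y, since then ‖Û_⊥ᵀY‖ equals the (r+1)-st singular value of Y). Then ‖Û_⊥ᵀ X‖ ≤ 2‖Z‖ and ‖Û_⊥ᵀ X‖_F ≤ 2√r · ‖Z‖. -/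

import Mathlib

open Matrix BigOperators

noncomputable section

/-- Euclidean norm of a vector. -/
def vnorm {ι : Type*} [Fintype ι] (v : ι → ℝ) : ℝ := Real.sqrt (∑ i, v i ^ 2)

/-- Spectral norm (ℓ₂→ℓ₂ operator norm) of a matrix. -/
def specNorm {ι κ : Type*} [Fintype ι] [Fintype κ] (A : Matrix ι κ ℝ) : ℝ :=
  sSup {x | ∃ v : κ → ℝ, vnorm v ≤ 1 ∧ x = vnorm (A.mulVec v)}

/-- Squared Frobenius norm of a matrix. -/
def mfrobSq {ι κ : Type*} [Fintype ι] [Fintype κ] (A : Matrix ι κ ℝ) : ℝ :=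
  ∑ i, ∑ j, A i j ^ 2

/-- Frobenius norm of a matrix. -/
def mfrob {ι κ : Type*} [Fintype ι] [Fintype κ] (A : Matrix ι κ ℝ) : ℝ :=
  Real.sqrt (mfrobSq A)

namespace LowRankAux

variable {ι κ μ : Type*} [Fintype ι] [Fintype κ] [Fintype μ]

/-- The continuous linear map on Euclidean spaces given by a matrix. -/
def toCLM [DecidableEq κ] (A : Matrix ι κ ℝ) : EuclideanSpace ℝ κ →L[ℝ] EuclideanSpace ℝ ι :=
  LinearMap.toContinuousLinearMap (Matrix.toEuclideanLin A)

lemma vnorm_eq (v : ι → ℝ) : vnorm v = ‖(WithLp.equiv 2 (ι → ℝ)).symm v‖ := by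
  rw [EuclideanSpace.norm_eq]
  simp [vnorm, sq_abs]

lemma toCLM_apply [DecidableEq κ] (A : Matrix ι κ ℝ) (v : EuclideanSpace ℝ κ) :
    toCLM A v = (WithLp.equiv 2 (ι → ℝ)).symm (A.mulVec (WithLp.equiv 2 (κ → ℝ) v)) := rfl

lemma specNorm_eq [DecidableEq κ] (A : Matrix ι κ ℝ) : specNorm A = ‖toCLM A‖ := by
  have hset : {x | ∃ v : κ → ℝ, vnorm v ≤ 1 ∧ x = vnorm (A.mulVec v)} =
      (fun x => ‖toCLM A x‖) '' Metric.closedBall 0 1 := by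
    ext x
    constructor
    · rintro ⟨v, hv, rfl⟩
      refine ⟨(WithLp.equiv 2 (κ → ℝ)).symm v, ?_, ?_⟩
      · rw [Metric.mem_closedBall, dist_zero_right]; rw [vnorm_eq] at hv; exact hv
      · simp only [vnorm_eq, toCLM_apply, Equiv.apply_symm_apply]
    · rintro ⟨w, hw, rfl⟩
      refine ⟨WithLp.equiv 2 (κ → ℝ) w, ?_, ?_⟩
      · rw [vnorm_eq]; simpa [Metric.mem_closedBall, dist_zero_right] using hw
      · simp only [vnorm_eq, toCLM_apply, Equiv.symm_apply_apply]
  rw [specNorm, hset, (toCLM A).sSup_unitClosedBall_eq_norm]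

end LowRankAux

namespace LowRankAux2
open LowRankAux

variable {ι κ μ : Type*} [Fintype ι] [Fintype κ] [Fintype μ]

lemma vnorm_nonneg (v : ι → ℝ) : 0 ≤ vnorm v := Real.sqrt_nonneg _

lemma dot_self_eq (x : ι → ℝ) : x ⬝ᵥ x = vnorm x ^ 2 := by
  rw [vnorm, Real.sq_sqrt (by positivity)]
  simp [dotProduct, sq]

lemma dot_le (x y : ι → ℝ) : x ⬝ᵥ y ≤ vnorm x * vnorm y := by
  have h := real_inner_le_norm ((WithLp.equiv 2 (ι → ℝ)).symm x) ((WithLp.equiv 2 (ι → ℝ)).symm y)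
  rw [vnorm_eq x, vnorm_eq y]
  refine le_trans (le_of_eq ?_) h
  simp [PiLp.inner_apply, RCLike.inner_apply, dotProduct, mul_comm]

lemma vnorm_mulVec_le [DecidableEq κ] (A : Matrix ι κ ℝ) (x : κ → ℝ) :
    vnorm (A *ᵥ x) ≤ specNorm A * vnorm x := by
  rw [specNorm_eq, vnorm_eq x, vnorm_eq (A *ᵥ x)]
  have h := (toCLM A).le_opNorm ((WithLp.equiv 2 (κ → ℝ)).symm x)
  simpa [toCLM_apply] using h

lemma specNorm_nonneg [DecidableEq κ] (A : Matrix ι κ ℝ) : 0 ≤ specNorm A := by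
  rw [specNorm_eq]; exact norm_nonneg _

lemma specNorm_le_of_forall [Fintype κ] (A : Matrix ι κ ℝ) (c : ℝ)
    (h : ∀ v : κ → ℝ, vnorm v ≤ 1 → vnorm (A *ᵥ v) ≤ c) : specNorm A ≤ c := by
  apply csSup_le
  · exact ⟨vnorm (A *ᵥ 0), 0, by simp [vnorm], rfl⟩
  · rintro x ⟨v, hv, rfl⟩
    exact h v hv

lemma toCLM_add [DecidableEq κ] (A B : Matrix ι κ ℝ) :
    toCLM (A + B) = toCLM A + toCLM B := by
  unfold toCLM
  rw [map_add, map_add]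

lemma vnorm_eq_sqrt_dot (x : ι → ℝ) : vnorm x = Real.sqrt (x ⬝ᵥ x) := by
  rw [vnorm]; congr 1; simp [dotProduct, sq]

lemma specNorm_orth_mulVec [DecidableEq κ] {U : Matrix ι κ ℝ} (hU : Uᵀ * U = 1) (w : ι → ℝ) :
    vnorm (Uᵀ *ᵥ w) ≤ vnorm w := by
  set u := Uᵀ *ᵥ w with hu
  have h1 : u ⬝ᵥ u = w ⬝ᵥ (U *ᵥ u) := by
    rw [hu, Matrix.mulVec_transpose, ← Matrix.dotProduct_mulVec]
  have h2 : (U *ᵥ u) ⬝ᵥ (U *ᵥ u) = u ⬝ᵥ u := by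
    rw [Matrix.dotProduct_mulVec, ← Matrix.mulVec_transpose, Matrix.mulVec_mulVec, hU,
      Matrix.one_mulVec]
  have h3 : vnorm (U *ᵥ u) = vnorm u := by
    rw [vnorm_eq_sqrt_dot, vnorm_eq_sqrt_dot, h2]
  have h4 : vnorm u ^ 2 ≤ vnorm w * vnorm u := by
    rw [← dot_self_eq, h1]
    calc w ⬝ᵥ (U *ᵥ u) ≤ vnorm w * vnorm (U *ᵥ u) := dot_le _ _
    _ = vnorm w * vnorm u := by rw [h3]
  rcases eq_or_lt_of_le (vnorm_nonneg u) with h0 | h0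
  · rw [← h0]; exact vnorm_nonneg w
  · nlinarith [h4]

end LowRankAux2

namespace Frob
open LowRankAux LowRankAux2

variable {ι κ μ : Type*} [Fintype ι] [Fintype κ] [Fintype μ]

lemma trace_transpose_mul_self [DecidableEq κ] (A : Matrix ι κ ℝ) :
    (Aᴴ * A).trace = mfrobSq A := by
  rw [Matrix.trace, mfrobSq]
  simp only [Matrix.diag, Matrix.mul_apply, Matrix.conjTranspose_apply, star_trivial, sq]
  exact Finset.sum_comm

lemma trace_eq_sum_eigenvalues [DecidableEq κ] {G : Matrix κ κ ℝ} (hG : G.IsHermitian) :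
    G.trace = ∑ i, hG.eigenvalues i := by
  conv_lhs => rw [hG.spectral_theorem, Unitary.conjStarAlgAut_apply]
  rw [Matrix.trace_mul_cycle, (Matrix.mem_unitaryGroup_iff').mp (hG.eigenvectorUnitary).2,
    one_mul, Matrix.trace_diagonal]
  simp

lemma eigenvalue_le [DecidableEq κ] (A : Matrix ι κ ℝ) (i : κ) :
    (Matrix.isHermitian_conjTranspose_mul_self A).eigenvalues i ≤ specNorm A ^ 2 := by
  set hG := Matrix.isHermitian_conjTranspose_mul_self A with hGdef
  set v : κ → ℝ := ⇑(hG.eigenvectorBasis i) with hv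
  have hnorm : vnorm v = 1 := by
    rw [vnorm_eq]
    exact hG.eigenvectorBasis.orthonormal.1 i
  have hmul : (Aᴴ * A) *ᵥ v = hG.eigenvalues i • v := hG.mulVec_eigenvectorBasis i
  have h1 : ((Aᴴ * A) *ᵥ v) ⬝ᵥ v = hG.eigenvalues i := by
    rw [hmul, smul_dotProduct, dot_self_eq, hnorm]; simp
  have h2 : ((Aᴴ * A) *ᵥ v) ⬝ᵥ v = (A *ᵥ v) ⬝ᵥ (A *ᵥ v) := by
    rw [← Matrix.mulVec_mulVec, Matrix.conjTranspose_eq_transpose_of_trivial,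
      Matrix.mulVec_transpose, ← Matrix.dotProduct_mulVec]
  have h4 := vnorm_mulVec_le A v
  rw [hnorm, mul_one] at h4
  have h5 : (A *ᵥ v) ⬝ᵥ (A *ᵥ v) ≤ specNorm A ^ 2 := by
    rw [dot_self_eq]
    exact pow_le_pow_left₀ (vnorm_nonneg _) h4 2
  rw [← h1, h2]; exact h5

lemma mfrobSq_le [DecidableEq κ] (A : Matrix ι κ ℝ) (r : ℕ) (h : A.rank ≤ r) :
    mfrobSq A ≤ r * specNorm A ^ 2 := by
  classical
  set hG := Matrix.isHermitian_conjTranspose_mul_self A with hGdef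
  have htr : mfrobSq A = ∑ i, hG.eigenvalues i := by
    rw [← trace_transpose_mul_self, trace_eq_sum_eigenvalues]
  have hcard : (Finset.univ.filter fun i => hG.eigenvalues i ≠ 0).card ≤ r := by
    have h1 : A.rank = Fintype.card {i // hG.eigenvalues i ≠ 0} := by
      rw [← Matrix.rank_conjTranspose_mul_self A]
      exact hG.rank_eq_card_non_zero_eigs
    rw [Fintype.card_subtype] at h1
    exact h1 ▸ h
  have hsum : ∑ i, hG.eigenvalues i
      = ∑ i ∈ Finset.univ.filter (fun i => hG.eigenvalues i ≠ 0), hG.eigenvalues i :=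
    (Finset.sum_filter_ne_zero _).symm
  have hb := Finset.sum_le_card_nsmul (Finset.univ.filter fun i => hG.eigenvalues i ≠ 0)
    _ (specNorm A ^ 2) (fun i _ => eigenvalue_le A i)
  rw [nsmul_eq_mul] at hb
  calc mfrobSq A = _ := htr.trans hsum
  _ ≤ ((Finset.univ.filter fun i => hG.eigenvalues i ≠ 0).card : ℝ) * specNorm A ^ 2 := hb
  _ ≤ r * specNorm A ^ 2 :=
    mul_le_mul_of_nonneg_right (Nat.cast_le.mpr hcard) (sq_nonneg _)

lemma specNorm_orth_mul [DecidableEq ι] [DecidableEq κ] [DecidableEq μ] {U : Matrix ι κ ℝ} (hU : Uᵀ * U = 1)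
    (M : Matrix ι μ ℝ) : specNorm (Uᵀ * M) ≤ specNorm M := by
  apply specNorm_le_of_forall
  intro v hv
  rw [← Matrix.mulVec_mulVec]
  refine le_trans (specNorm_orth_mulVec hU _) ?_
  refine le_trans (vnorm_mulVec_le M v) ?_
  exact mul_le_of_le_one_right (specNorm_nonneg M) hv

end Frob

open LowRankAux LowRankAux2 Frob

/-- Spectral-norm residual bound for low-rank matrix perturbation
(first part of Lemma 6 of Zhang–Han, 2018):
`‖Û_⊥ᵀ X‖ ≤ 2‖Z‖` and `‖Û_⊥ᵀ X‖_F ≤ 2√r ‖Z‖`. -/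
theorem low_rank_perturbation_residual_spectral
    (m n r : ℕ) (X Z : Matrix (Fin m) (Fin n) ℝ) (hrank : X.rank ≤ r)
    (Uhat : Matrix (Fin m) (Fin r) ℝ) (Uhatperp : Matrix (Fin m) (Fin (m - r)) ℝ)
    (hUhat : Uhatᵀ * Uhat = 1) (hUhatperp : Uhatperpᵀ * Uhatperp = 1)
    (hUhato : Uhatᵀ * Uhatperp = 0)
    (hlead : ∀ B : Matrix (Fin m) (Fin n) ℝ, B.rank ≤ r →
      specNorm (Uhatperpᵀ * (X + Z)) ≤ specNorm (X + Z - B)) :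
    specNorm (Uhatperpᵀ * X) ≤ 2 * specNorm Z ∧
    mfrob (Uhatperpᵀ * X) ≤ 2 * Real.sqrt r * specNorm Z := by
  have key1 : specNorm (Uhatperpᵀ * X) ≤ 2 * specNorm Z := by
    have e : Uhatperpᵀ * X = Uhatperpᵀ * (X + Z) - Uhatperpᵀ * Z := by
      rw [← Matrix.mul_sub, add_sub_cancel_right]
    have h1 : specNorm (Uhatperpᵀ * X)
        ≤ specNorm (Uhatperpᵀ * (X + Z)) + specNorm (Uhatperpᵀ * Z) := by
      rw [specNorm_eq, specNorm_eq, specNorm_eq, e]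
      have hsub : toCLM (Uhatperpᵀ * (X + Z) - Uhatperpᵀ * Z)
          = toCLM (Uhatperpᵀ * (X + Z)) - toCLM (Uhatperpᵀ * Z) := by
        unfold toCLM; rw [map_sub, map_sub]
      rw [hsub]; exact norm_sub_le _ _
    have h2 : specNorm (Uhatperpᵀ * (X + Z)) ≤ specNorm Z :=
      (hlead X hrank).trans_eq (by rw [add_sub_cancel_left])
    have h3 := specNorm_orth_mul hUhatperp Z
    linarith
  refine ⟨key1, ?_⟩
  have hrk : (Uhatperpᵀ * X).rank ≤ r := le_trans (Matrix.rank_mul_le_right _ _) hrank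
  have hfs := mfrobSq_le (Uhatperpᵀ * X) r hrk
  have hstep : mfrob (Uhatperpᵀ * X) ≤ Real.sqrt r * specNorm (Uhatperpᵀ * X) := by
    rw [mfrob]
    calc Real.sqrt (mfrobSq (Uhatperpᵀ * X))
        ≤ Real.sqrt (r * specNorm (Uhatperpᵀ * X) ^ 2) := Real.sqrt_le_sqrt hfs
    _ = Real.sqrt r * specNorm (Uhatperpᵀ * X) := by
        rw [Real.sqrt_mul (Nat.cast_nonneg r), Real.sqrt_sq (specNorm_nonneg _)]
  calc mfrob (Uhatperpᵀ * X) ≤ Real.sqrt r * specNorm (Uhatperpᵀ * X) := hstep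
  _ ≤ Real.sqrt r * (2 * specNorm Z) := mul_le_mul_of_nonneg_left key1 (Real.sqrt_nonneg _)
  _ = 2 * Real.sqrt r * specNorm Z := by ring

end
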